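/- Let n ≥ 2, X an n-Hausdorff space, and h : X → X a homeomorphism. Then there is a homeomorphism n-kh : n-kX → n-kX of the n-Katětov extension n-kX of X that extends h. -/

import Mathlib

open Set Cardinal

/-- A space is `n`-Hausdorff if any `n` distinct points admit open
neighbourhoods with empty total intersection. -/
def NHausdorff (n : ℕ) (X : Type*) [TopologicalSpace X] : Prop :=
  ∀ f : Fin n ↪ X, ∃ U : Fin n → Set X,
    (∀ i, IsOpen (U i) ∧ f i ∈ U i) ∧ ⋂ i, U i = ∅

/-- An open filter on `X`: a nonempty collection of nonempty open sets, closed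
under finite intersections and upward closed in the lattice of open sets. -/
def IsOpenFilter {X : Type u} [TopologicalSpace X] (F : Set (Set X)) : Prop :=
  F.Nonempty ∧ (∀ U ∈ F, IsOpen U ∧ U.Nonempty) ∧
  (∀ U ∈ F, ∀ V ∈ F, U ∩ V ∈ F) ∧
  (∀ U ∈ F, ∀ V : Set X, IsOpen V → U ⊆ V → V ∈ F)

/-- An open ultrafilter on `X`: a maximal open filter. -/
def IsOpenUltrafilter {X : Type u} [TopologicalSpace X] (F : Set (Set X)) : Prop :=
  IsOpenFilter F ∧ ∀ G : Set (Set X), IsOpenFilter G → F ⊆ G → G = F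

/-- `adh F = a F = ⋂ {cl U : U ∈ F}`. -/
def adh {X : Type u} [TopologicalSpace X] (F : Set (Set X)) : Set X :=
  ⋂ U ∈ F, closure U

/-- Index set of the added points: open ultrafilters `F` with `|a F| < n - 1`
(so finitely many points in `a F`). -/
def KIndex (n : ℕ) (X : Type u) [TopologicalSpace X] : Type u :=
  {F : Set (Set X) // IsOpenUltrafilter F ∧ #(adh F) < (n - 1 : ℕ)}

/-- The underlying set of the `n`-Katětov extension `n-kX` of `X`: the points
of `X` together with, for each open ultrafilter `F` with `|a F| < n - 1`,
`(n - 1) - |a F|` new points. -/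
def KatetovExt (n : ℕ) (X : Type u) [TopologicalSpace X] : Type u :=
  X ⊕ (Σ F : KIndex n X, Fin (n - 1 - (adh F.1).ncard))

/-- The topology of `n-kX`: `V` is open iff `V ∩ X` is open in `X` and,
whenever an added point `p_{F,i}` lies in `V`, `V ∩ X ∈ F`. -/
instance (n : ℕ) (X : Type u) [TopologicalSpace X] :
    TopologicalSpace (KatetovExt n X) where
  IsOpen V := IsOpen (Sum.inl ⁻¹' V : Set X) ∧
    ∀ (F : KIndex n X) (i), (Sum.inr ⟨F, i⟩ : KatetovExt n X) ∈ V →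
      (Sum.inl ⁻¹' V : Set X) ∈ F.1
  isOpen_univ := by
    refine ⟨isOpen_univ, fun F i _ => ?_⟩
    obtain ⟨⟨⟨U, hU⟩, hmem, _, hup⟩, _⟩ := F.2.1
    exact hup U hU univ isOpen_univ (subset_univ U)
  isOpen_inter := by
    rintro V W ⟨hV, hV'⟩ ⟨hW, hW'⟩
    refine ⟨hV.inter hW, fun F i hi => ?_⟩
    obtain ⟨⟨_, _, hinter, _⟩, _⟩ := F.2.1
    exact hinter _ (hV' F i hi.1) _ (hW' F i hi.2)
  isOpen_sUnion := by
    intro S hS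
    constructor
    · erw [preimage_sUnion]
      exact isOpen_biUnion fun V hV => (hS V hV).1
    · rintro F i hi
      obtain ⟨V, hVS, hiV⟩ := hi
      obtain ⟨⟨_, _, _, hup⟩, _⟩ := F.2.1
      refine hup _ ((hS V hVS).2 F i hiV) _ ?_ ?_
      · erw [preimage_sUnion]
        exact isOpen_biUnion fun W hW => (hS W hW).1
      · exact fun x hx => ⟨V, hVS, hx⟩


section Aux

variable {X : Type u} [TopologicalSpace X]

/-- Push an open filter forward along a homeomorphism. -/
def mapFilter (e : X ≃ₜ X) (F : Set (Set X)) : Set (Set X) := {U | e ⁻¹' U ∈ F}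

lemma mapFilter_mapFilter (e : X ≃ₜ X) (F : Set (Set X)) :
    mapFilter e.symm (mapFilter e F) = F := by
  ext U
  simp [mapFilter, Set.preimage_preimage]

lemma isOpenFilter_mapFilter (e : X ≃ₜ X) {F : Set (Set X)} (hF : IsOpenFilter F) :
    IsOpenFilter (mapFilter e F) := by
  obtain ⟨⟨W, hW⟩, hmem, hinter, hup⟩ := hF
  refine ⟨⟨e.symm ⁻¹' W, ?_⟩, ?_, ?_, ?_⟩
  · show e ⁻¹' (e.symm ⁻¹' W) ∈ F
    simpa [Set.preimage_preimage] using hW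
  · intro U hU
    have h1 := hmem _ hU
    constructor
    · have : U = e.symm ⁻¹' (e ⁻¹' U) := by simp [Set.preimage_preimage]
      rw [this]
      exact h1.1.preimage e.symm.continuous
    · obtain ⟨x, hx⟩ := h1.2
      exact ⟨e x, hx⟩
  · intro U hU V hV
    exact hinter _ hU _ hV
  · intro U hU V hVopen hUV
    exact hup _ hU _ (hVopen.preimage e.continuous) (fun x hx => hUV hx)

lemma mapFilter_mapFilter' (e : X ≃ₜ X) (F : Set (Set X)) :
    mapFilter e (mapFilter e.symm F) = F := by
  ext U
  simp [mapFilter, Set.preimage_preimage]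

lemma isOpenUltrafilter_mapFilter (e : X ≃ₜ X) {F : Set (Set X)}
    (hF : IsOpenUltrafilter F) : IsOpenUltrafilter (mapFilter e F) := by
  refine ⟨isOpenFilter_mapFilter e hF.1, fun G hG hsub => ?_⟩
  have h1 : F ⊆ mapFilter e.symm G := by
    intro U hU
    have : U ∈ mapFilter e.symm (mapFilter e F) := by rw [mapFilter_mapFilter]; exact hU
    exact hsub this
  have h2 := hF.2 _ (isOpenFilter_mapFilter e.symm hG) h1
  have h3 := congrArg (mapFilter e) h2
  rwa [mapFilter_mapFilter' e] at h3

lemma adh_mapFilter (e : X ≃ₜ X) (F : Set (Set X)) :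
    adh (mapFilter e F) = e.symm ⁻¹' adh F := by
  ext x
  simp only [adh, Set.mem_iInter, Set.mem_preimage]
  constructor
  · intro hx V hV
    have : e.symm ⁻¹' V ∈ mapFilter e F := by
      show e ⁻¹' (e.symm ⁻¹' V) ∈ F
      simpa [Set.preimage_preimage] using hV
    have h2 := hx _ this
    rwa [← e.symm.preimage_closure] at h2
  · intro hx U hU
    have h1 : e.symm x ∈ closure (e ⁻¹' U) := hx _ hU
    rw [← e.preimage_closure] at h1
    simpa using h1

lemma ncard_adh_mapFilter (e : X ≃ₜ X) (F : Set (Set X)) :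
    (adh (mapFilter e F)).ncard = (adh F).ncard := by
  rw [adh_mapFilter]
  have : (e.symm ⁻¹' adh F : Set X) = (e : X → X) '' adh F := by
    ext x
    constructor
    · intro hx; exact ⟨e.symm x, hx, by simp⟩
    · rintro ⟨y, hy, rfl⟩; simpa using hy
  rw [this, Set.ncard_image_of_injective _ e.injective]

lemma mk_adh_mapFilter (e : X ≃ₜ X) (F : Set (Set X)) :
    #(adh (mapFilter e F)) = #(adh F) := by
  rw [adh_mapFilter]
  have : (e.symm ⁻¹' adh F : Set X) = (e : X → X) '' adh F := by
    ext x
    constructor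
    · intro hx; exact ⟨e.symm x, hx, by simp⟩
    · rintro ⟨y, hy, rfl⟩; simpa using hy
  rw [this, Cardinal.mk_image_eq e.injective]

/-- The induced map on indices of added points. -/
def kIndexMap (n : ℕ) (e : X ≃ₜ X) (F : KIndex n X) : KIndex n X :=
  ⟨mapFilter e F.1, isOpenUltrafilter_mapFilter e F.2.1,
    by rw [mk_adh_mapFilter]; exact F.2.2⟩

lemma kIndexMap_symm (n : ℕ) (e : X ≃ₜ X) (F : KIndex n X) :
    kIndexMap n e.symm (kIndexMap n e F) = F := by
  apply Subtype.ext
  exact mapFilter_mapFilter e F.1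

lemma fin_eq (n : ℕ) (e : X ≃ₜ X) (F : KIndex n X) :
    n - 1 - (adh F.1).ncard = n - 1 - (adh (kIndexMap n e F).1).ncard := by
  rw [show (kIndexMap n e F).1 = mapFilter e F.1 from rfl, ncard_adh_mapFilter]

/-- The induced bare map on the Katětov extension. -/
noncomputable def kMap (n : ℕ) (e : X ≃ₜ X) : KatetovExt n X → KatetovExt n X :=
  Sum.map e (fun p => ⟨kIndexMap n e p.1, Fin.cast (fin_eq n e p.1) p.2⟩)

lemma kMap_kMap (n : ℕ) (e : X ≃ₜ X) (x : KatetovExt n X) :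
    kMap n e.symm (kMap n e x) = x := by
  cases x with
  | inl x => simp [kMap]; rfl
  | inr p =>
    obtain ⟨F, i⟩ := p
    simp only [kMap, Sum.map_inr]
    have hF := kIndexMap_symm n e F
    refine congrArg Sum.inr ?_
    apply Sigma.ext
    · exact hF
    · exact (Fin.heq_ext_iff (congrArg (fun G : KIndex n X => n - 1 - (adh G.1).ncard) hF)).2 (by simp)

lemma continuous_kMap (n : ℕ) (e : X ≃ₜ X) : Continuous (kMap n e) := by
  rw [continuous_def]
  intro V hV
  obtain ⟨hV1, hV2⟩ := hV
  have key : (Sum.inl ⁻¹' (kMap n e ⁻¹' V) : Set X) = e ⁻¹' (Sum.inl ⁻¹' V) := rfl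
  constructor
  · erw [key]; exact hV1.preimage e.continuous
  · intro F i hi
    erw [key]
    exact hV2 (kIndexMap n e F) (Fin.cast (fin_eq n e F) i) hi

end Aux

theorem stmt18 (n : ℕ) (hn : 2 ≤ n) (X : Type u) [TopologicalSpace X]
    (hX : NHausdorff n X) (h : X ≃ₜ X) :
    ∃ H : KatetovExt n X ≃ₜ KatetovExt n X,
      ∀ x : X, H (Sum.inl x) = Sum.inl (h x) := by
  refine ⟨⟨⟨kMap n h, kMap n h.symm, fun x => kMap_kMap n h x,
    fun x => by simpa using kMap_kMap n h.symm x⟩,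
    continuous_kMap n h, continuous_kMap n h.symm⟩, fun x => rfl⟩
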